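/- If a convex body K in ℝⁿ of minimal width w is covered by finitely many planks of widths w₁, …, w_l, then w₁ + … + w_l ≥ w. -/

import Mathlib

open scoped RealInnerProductSpace

variable {n : ℕ}

/-- A plank (slab) of width `w` in direction of the unit vector `u`. -/
def plank (u : EuclideanSpace ℝ (Fin n)) (a w : ℝ) : Set (EuclideanSpace ℝ (Fin n)) :=
  {x | a ≤ (inner ℝ x u : ℝ) ∧ (inner ℝ x u : ℝ) ≤ a + w}

/-- The width of a set `K` in direction `u`. -/
noncomputable def dirWidth (K : Set (EuclideanSpace ℝ (Fin n)))
    (u : EuclideanSpace ℝ (Fin n)) : ℝ :=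
  sSup ((fun x => (inner ℝ x u : ℝ)) '' K) - sInf ((fun x => (inner ℝ x u : ℝ)) '' K)


local notation "𝔼" => EuclideanSpace ℝ (Fin n)

/-- support function -/
noncomputable def sF (C : Set (EuclideanSpace ℝ (Fin n))) (y : EuclideanSpace ℝ (Fin n)) : ℝ :=
  sSup ((fun x => ⟪x, y⟫) '' C)

lemma bddAbove_sF (C : Set (EuclideanSpace ℝ (Fin n))) (hC : IsCompact C)
    (y : 𝔼) : BddAbove ((fun x => ⟪x, y⟫) '' C) :=
  (hC.image (Continuous.inner continuous_id continuous_const)).bddAbove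

lemma le_sF {C : Set (EuclideanSpace ℝ (Fin n))} (hC : IsCompact C) {x : 𝔼} (hx : x ∈ C)
    (y : 𝔼) : ⟪x, y⟫ ≤ sF C y :=
  le_csSup (bddAbove_sF C hC y) ⟨x, hx, rfl⟩

lemma sF_le {C : Set (EuclideanSpace ℝ (Fin n))} (hne : C.Nonempty) {y : 𝔼} {a : ℝ}
    (h : ∀ x ∈ C, ⟪x, y⟫ ≤ a) : sF C y ≤ a :=
  csSup_le (hne.image _) (by rintro r ⟨x, hx, rfl⟩; exact h x hx)

lemma sF_add_le {C : Set (EuclideanSpace ℝ (Fin n))} (hC : IsCompact C) (hne : C.Nonempty)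
    (y z : 𝔼) : sF C (y + z) ≤ sF C y + sF C z := by
  refine sF_le hne fun x hx => ?_
  rw [inner_add_right]
  exact add_le_add (le_sF hC hx y) (le_sF hC hx z)

lemma sF_smul {C : Set (EuclideanSpace ℝ (Fin n))} (hC : IsCompact C) (hne : C.Nonempty)
    {a : ℝ} (ha : 0 ≤ a) (y : 𝔼) : sF C (a • y) = a * sF C y := by
  rcases eq_or_lt_of_le ha with rfl | ha
  · simp only [zero_smul, zero_mul]
    refine le_antisymm (sF_le hne fun x hx => by simp [inner_zero_right]) ?_
    obtain ⟨x, hx⟩ := hne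
    have := le_sF hC hx (0 : 𝔼)
    simpa [inner_zero_right] using this
  · refine le_antisymm (sF_le hne fun x hx => ?_) ?_
    · rw [real_inner_smul_right]
      exact mul_le_mul_of_nonneg_left (le_sF hC hx y) ha.le
    · have h2 : sF C y ≤ a⁻¹ * sF C (a • y) := by
        refine sF_le hne fun x hx => ?_
        have := le_sF hC hx (a • y)
        rw [real_inner_smul_right] at this
        calc ⟪x, y⟫ = a⁻¹ * (a * ⟪x, y⟫) := by field_simp
        _ ≤ a⁻¹ * sF C (a • y) := by
            exact mul_le_mul_of_nonneg_left this (inv_nonneg.2 ha.le)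
      calc a * sF C y ≤ a * (a⁻¹ * sF C (a • y)) := mul_le_mul_of_nonneg_left h2 ha.le
      _ = sF C (a • y) := by field_simp


lemma dirWidth_eq_sF (K : Set (EuclideanSpace ℝ (Fin n))) (v : EuclideanSpace ℝ (Fin n)) :
    dirWidth K v = sF K v + sF K (-v) := by
  unfold dirWidth sF
  rw [Real.sInf_def, sub_neg_eq_add, ← Set.image_neg_eq_neg, Set.image_image]
  simp [inner_neg_right]

/-- shifted set -/
def shf (b : EuclideanSpace ℝ (Fin n)) (C : Set (EuclideanSpace ℝ (Fin n))) :
    Set (EuclideanSpace ℝ (Fin n)) := (fun x => b + x) '' C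

lemma shf_compact {C : Set (EuclideanSpace ℝ (Fin n))} (hC : IsCompact C) (b) :
    IsCompact (shf b C) := hC.image (continuous_const.add continuous_id)

lemma shf_convex {C : Set (EuclideanSpace ℝ (Fin n))} (hC : Convex ℝ C) (b) :
    Convex ℝ (shf b C) := hC.translate b

lemma shf_nonempty {C : Set (EuclideanSpace ℝ (Fin n))} (hC : C.Nonempty) (b) :
    (shf b C).Nonempty := hC.image _

lemma sF_shf {C : Set (EuclideanSpace ℝ (Fin n))} (hC : IsCompact C) (hne : C.Nonempty)
    (b y : EuclideanSpace ℝ (Fin n)) : sF (shf b C) y = ⟪b, y⟫ + sF C y := by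
  refine le_antisymm (sF_le (shf_nonempty hne b) ?_) ?_
  · rintro x ⟨z, hz, rfl⟩
    rw [inner_add_left]
    exact add_le_add_right (le_sF hC hz y) _
  · have h2 : sF C y ≤ sF (shf b C) y - ⟪b, y⟫ := by
      refine sF_le hne fun z hz => ?_
      have := le_sF (shf_compact hC b) (⟨z, hz, rfl⟩ : b + z ∈ shf b C) y
      rw [inner_add_left] at this
      linarith
    linarith


lemma mem_shf {C : Set (EuclideanSpace ℝ (Fin n))} {x b : EuclideanSpace ℝ (Fin n)} :
    x ∈ shf b C ↔ x - b ∈ C := by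
  constructor
  · rintro ⟨y, hy, rfl⟩; simpa using hy
  · intro h; exact ⟨x - b, h, by simp⟩
lemma lemS (D : Set ((EuclideanSpace ℝ (Fin n)) × ℝ)) (hD : IsCompact D) (hDc : Convex ℝ D)
    (γ : ℝ) (h0 : ∀ r : ℝ, ((0 : EuclideanSpace ℝ (Fin n)), r) ∈ D → r ≤ γ)
    (hne : ∃ r : ℝ, ((0 : EuclideanSpace ℝ (Fin n)), r) ∈ D) {ε : ℝ} (hε : 0 < ε) :
    ∃ p : EuclideanSpace ℝ (Fin n), ∀ d r, (d, r) ∈ D → ⟪p, d⟫ + r ≤ γ + ε := by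
  classical
  set V : Set ((EuclideanSpace ℝ (Fin n)) × ℝ) := {(0 : EuclideanSpace ℝ (Fin n))} ×ˢ Set.Ici (γ + ε/2) with hV
  have hVc : Convex ℝ V := (convex_singleton _).prod (convex_Ici _)
  have hVcl : IsClosed V := isClosed_singleton.prod isClosed_Ici
  have hdisj : Disjoint D V := by
    rw [Set.disjoint_left]
    rintro ⟨d, r⟩ hD2 hV2
    simp only [hV, Set.mem_prod, Set.mem_singleton_iff, Set.mem_Ici] at hV2
    obtain ⟨rfl, hr⟩ := hV2
    have := h0 r hD2
    linarith
  obtain ⟨f, s, t, hfs, hst, hft⟩ :=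
    geometric_hahn_banach_compact_closed hDc hD hVc hVcl hdisj
  set β : ℝ := f ((0 : EuclideanSpace ℝ (Fin n)), 1) with hβ
  have hfr : ∀ r : ℝ, f ((0 : EuclideanSpace ℝ (Fin n)), r) = r * β := by
    intro r
    have : ((0 : EuclideanSpace ℝ (Fin n)), r) = r • ((0 : EuclideanSpace ℝ (Fin n)), 1) := by
      simp [Prod.smul_def]
    rw [this, map_smul, smul_eq_mul, hβ]
  obtain ⟨r₀, hr₀⟩ := hne
  have hr₀β : r₀ * β < s := by have := hfs _ hr₀; rwa [hfr] at this
  have hβpos : 0 < β := by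
    by_contra hb
    push_neg at hb
    rcases eq_or_lt_of_le hb with hb0 | hbneg
    · have h1 : t < f ((0 : EuclideanSpace ℝ (Fin n)), γ + ε/2) := hft _ (by simp [hV])
      rw [hfr] at h1
      rw [hb0, mul_zero] at h1 hr₀β
      linarith
    · set r := max (γ + ε/2) ((t - 1)/β) with hr
      have h1 : t < f ((0 : EuclideanSpace ℝ (Fin n)), r) := hft _ (by simp [hV, hr, le_max_left])
      rw [hfr] at h1
      have h2 : r * β ≤ (t - 1)/β * β := by
        have := le_max_right (γ + ε/2) ((t - 1)/β)
        nlinarith [this]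
      rw [div_mul_cancel₀ _ (ne_of_lt hbneg)] at h2
      linarith
  -- the functional on E
  set φ : (EuclideanSpace ℝ (Fin n)) →L[ℝ] ℝ :=
    f.comp (ContinuousLinearMap.inl ℝ (EuclideanSpace ℝ (Fin n)) ℝ) with hφ
  set p : EuclideanSpace ℝ (Fin n) := β⁻¹ • (InnerProductSpace.toDual ℝ _).symm φ with hp
  refine ⟨p, fun d r hdr => ?_⟩
  have hsplit : f (d, r) = φ d + r * β := by
    have : (d, r) = ((d, 0) : (EuclideanSpace ℝ (Fin n)) × ℝ) + ((0 : EuclideanSpace ℝ (Fin n)), r) := by simp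
    rw [this, map_add, hfr]
    congr 1
  have h1 : f (d, r) < s := hfs _ hdr
  have h2 : t < f ((0 : EuclideanSpace ℝ (Fin n)), γ + ε/2) := hft _ (by simp [hV])
  rw [hfr] at h2
  have hpd : ⟪p, d⟫ = β⁻¹ * φ d := by
    rw [hp, inner_smul_left]
    simp only [RCLike.star_def, conj_trivial]
    congr 1
    exact InnerProductSpace.toDual_symm_apply
  have key : φ d + r * β < (γ + ε/2) * β := by
    rw [← hsplit] at *
    linarith
  rw [hpd]
  have hb0 : β ≠ 0 := ne_of_gt hβpos
  have h4 : β⁻¹ * (φ d + r * β) < β⁻¹ * ((γ + ε/2) * β) :=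
    mul_lt_mul_of_pos_left key (inv_pos.2 hβpos)
  have h5 : β⁻¹ * (φ d + r * β) = β⁻¹ * φ d + r := by field_simp
  have h6 : β⁻¹ * ((γ + ε/2) * β) = γ + ε/2 := by field_simp
  rw [h5, h6] at h4
  linarith
lemma exactness {A B : Set (EuclideanSpace ℝ (Fin n))} (hA : IsCompact A) (hAc : Convex ℝ A)
    (hB : IsCompact B) (hBc : Convex ℝ B) (hne : (A ∩ B).Nonempty)
    (v : EuclideanSpace ℝ (Fin n)) {ε : ℝ} (hε : 0 < ε) :
    ∃ p, sF A p + sF B (v - p) ≤ sF (A ∩ B) v + ε := by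
  classical
  set L : (EuclideanSpace ℝ (Fin n)) × (EuclideanSpace ℝ (Fin n)) →
      (EuclideanSpace ℝ (Fin n)) × ℝ := fun z => (z.1 - z.2, ⟪z.2, v⟫) with hL
  have hlin : IsLinearMap ℝ L := by
    constructor
    · intro a b
      simp only [hL, Prod.fst_add, Prod.snd_add, inner_add_left, Prod.mk_add_mk]
      rw [Prod.mk.injEq]
      exact ⟨by abel, rfl⟩
    · intro c a
      simp only [hL, Prod.smul_fst, Prod.smul_snd, real_inner_smul_left, Prod.smul_mk,
        smul_eq_mul]
      rw [Prod.mk.injEq]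
      exact ⟨(smul_sub c a.1 a.2).symm, rfl⟩
  set D : Set ((EuclideanSpace ℝ (Fin n)) × ℝ) := L '' (A ×ˢ B) with hD
  have hDcpt : IsCompact D := by
    refine (hA.prod hB).image ?_
    exact (continuous_fst.sub continuous_snd).prodMk
      (Continuous.inner continuous_snd continuous_const)
  have hDconv : Convex ℝ D := (hAc.prod hBc).is_linear_image hlin
  have hABcpt : IsCompact (A ∩ B) := hA.inter_right hB.isClosed
  set γ : ℝ := sF (A ∩ B) v with hγ
  have h0 : ∀ r : ℝ, ((0 : EuclideanSpace ℝ (Fin n)), r) ∈ D → r ≤ γ := by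
    rintro r ⟨⟨x, y⟩, ⟨hx, hy⟩, heq⟩
    simp only [hL, Prod.mk.injEq] at heq
    obtain ⟨h1, h2⟩ := heq
    have hxy : x = y := by
      have := sub_eq_zero.1 h1
      exact this
    subst hxy
    rw [← h2]
    exact le_sF hABcpt ⟨hx, hy⟩ v
  have hne0 : ∃ r : ℝ, ((0 : EuclideanSpace ℝ (Fin n)), r) ∈ D := by
    obtain ⟨x, hx⟩ := hne
    exact ⟨⟪x, v⟫, ⟨(x, x), ⟨hx.1, hx.2⟩, by simp [hL]⟩⟩
  obtain ⟨p, hp⟩ := lemS D hDcpt hDconv γ h0 hne0 hε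
  refine ⟨p, ?_⟩
  have hAne : A.Nonempty := ⟨hne.choose, hne.choose_spec.1⟩
  have hBne : B.Nonempty := ⟨hne.choose, hne.choose_spec.2⟩
  have key : ∀ x ∈ A, ∀ y ∈ B, ⟪x, p⟫ + ⟪y, v - p⟫ ≤ γ + ε := by
    intro x hx y hy
    have := hp (x - y) ⟪y, v⟫ ⟨(x, y), ⟨hx, hy⟩, rfl⟩
    have hexp : ⟪p, x - y⟫ = ⟪x, p⟫ - ⟪y, p⟫ := by
      rw [inner_sub_right, real_inner_comm p x, real_inner_comm p y]
    rw [hexp] at this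
    rw [inner_sub_right]
    linarith
  have h1 : sF B (v - p) ≤ γ + ε - sF A p := by
    refine sF_le hBne fun y hy => ?_
    have h2 : sF A p ≤ γ + ε - ⟪y, v - p⟫ := sF_le hAne fun x hx => by linarith [key x hx y hy]
    linarith
  linarith
lemma erosion_nonempty {C : Set (EuclideanSpace ℝ (Fin n))} (hC : IsCompact C)
    (hCc : Convex ℝ C) (hCne : C.Nonempty) {u : EuclideanSpace ℝ (Fin n)} (hu : ‖u‖ = 1)
    {c w₀ : ℝ} (hc : 0 ≤ c) (h2c : 2 * c ≤ w₀)
    (hwidth : ∀ v : EuclideanSpace ℝ (Fin n), ‖v‖ = 1 → w₀ ≤ sF C v + sF C (-v)) :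
    (shf (-(c • u)) C ∩ shf (c • u) C).Nonempty := by
  classical
  by_contra hemp
  rw [Set.not_nonempty_iff_eq_empty, ← Set.disjoint_iff_inter_eq_empty] at hemp
  obtain ⟨f, s, t, hfs, hst, hft⟩ :=
    geometric_hahn_banach_compact_closed (shf_convex hCc _) (shf_compact hC _)
      (shf_convex hCc _) (shf_compact hC _).isClosed hemp
  set vf : EuclideanSpace ℝ (Fin n) := (InnerProductSpace.toDual ℝ _).symm f with hvf
  have hfx : ∀ x, f x = ⟪vf, x⟫ := fun x => (InnerProductSpace.toDual_symm_apply).symm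
  have hA : ∀ x ∈ C, ⟪vf, x⟫ - c * ⟪vf, u⟫ < s := by
    intro x hx
    have := hfs _ (⟨x, hx, rfl⟩ : -(c • u) + x ∈ shf (-(c • u)) C)
    rw [hfx, inner_add_right, inner_neg_right, real_inner_smul_right] at this
    linarith
  have hB : ∀ x ∈ C, t < ⟪vf, x⟫ + c * ⟪vf, u⟫ := by
    intro x hx
    have := hft _ (⟨x, hx, rfl⟩ : c • u + x ∈ shf (c • u) C)
    rw [hfx, inner_add_right, real_inner_smul_right] at this
    linarith
  have hvf0 : vf ≠ 0 := by
    intro h0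
    obtain ⟨x, hx⟩ := hCne
    have h1 := hA x hx
    have h2 := hB x hx
    rw [h0] at h1 h2
    simp only [inner_zero_left] at h1 h2
    linarith
  set nv : ℝ := ‖vf‖ with hnv
  have hnvpos : 0 < nv := norm_pos_iff.2 hvf0
  set v : EuclideanSpace ℝ (Fin n) := nv⁻¹ • vf with hv
  have hvunit : ‖v‖ = 1 := by
    rw [hv, norm_smul, norm_inv, norm_norm]
    field_simp
  have h1 : sF C v ≤ nv⁻¹ * (s + c * ⟪vf, u⟫) := by
    refine sF_le hCne fun x hx => ?_
    rw [hv, real_inner_smul_right]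
    have h0 : ⟪x, vf⟫ ≤ s + c * ⟪vf, u⟫ := by
      rw [real_inner_comm]; linarith [hA x hx]
    exact mul_le_mul_of_nonneg_left h0 (by positivity)
  have h2 : sF C (-v) ≤ nv⁻¹ * (-(t - c * ⟪vf, u⟫)) := by
    refine sF_le hCne fun x hx => ?_
    rw [hv, inner_neg_right, real_inner_smul_right, ← mul_neg]
    have h3 : -⟪x, vf⟫ ≤ -(t - c * ⟪vf, u⟫) := by
      rw [real_inner_comm]; linarith [hB x hx]
    exact mul_le_mul_of_nonneg_left h3 (by positivity)
  have hiu : ⟪vf, u⟫ ≤ nv := by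
    calc ⟪vf, u⟫ ≤ ‖vf‖ * ‖u‖ := real_inner_le_norm vf u
    _ = nv := by rw [hu, mul_one]
  have hw := hwidth v hvunit
  have hsum : sF C v + sF C (-v) < nv⁻¹ * (2 * c * nv) := by
    have hcc : ⟪vf, u⟫ * c ≤ nv * c := mul_le_mul_of_nonneg_right hiu hc
    calc sF C v + sF C (-v) ≤ nv⁻¹ * (s + c * ⟪vf, u⟫) + nv⁻¹ * (-(t - c * ⟪vf, u⟫)) :=
          add_le_add h1 h2
    _ = nv⁻¹ * ((s - t) + 2 * (⟪vf, u⟫ * c)) := by ring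
    _ < nv⁻¹ * (2 * c * nv) := by
        refine mul_lt_mul_of_pos_left ?_ (by positivity)
        nlinarith
  have heq : nv⁻¹ * (2 * c * nv) = 2 * c := by
    field_simp
  rw [heq] at hsum
  linarith
lemma width_erosion {C : Set (EuclideanSpace ℝ (Fin n))} (hC : IsCompact C)
    (hCc : Convex ℝ C) (hCne : C.Nonempty) {u : EuclideanSpace ℝ (Fin n)} (hu : ‖u‖ = 1)
    {c w₀ : ℝ} (hc : 0 ≤ c) (h2c : 2 * c ≤ w₀)
    (hwidth : ∀ v : EuclideanSpace ℝ (Fin n), ‖v‖ = 1 → w₀ ≤ sF C v + sF C (-v))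
    {v : EuclideanSpace ℝ (Fin n)} (hv : ‖v‖ = 1) :
    w₀ - 2 * c ≤ sF (shf (-(c • u)) C ∩ shf (c • u) C) v
      + sF (shf (-(c • u)) C ∩ shf (c • u) C) (-v) := by
  classical
  have hne' : (shf (-(c • u)) C ∩ shf (c • u) C).Nonempty :=
    erosion_nonempty hC hCc hCne hu hc h2c hwidth
  have hAcpt := shf_compact hC (-(c • u))
  have hBcpt := shf_compact hC (c • u)
  have hAconv := shf_convex hCc (-(c • u))
  have hBconv := shf_convex hCc (c • u)
  refine le_of_forall_pos_le_add fun ε hε => ?_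
  obtain ⟨p, hp⟩ := exactness hAcpt hAconv hBcpt hBconv hne' v (half_pos hε)
  obtain ⟨q, hq⟩ := exactness hAcpt hAconv hBcpt hBconv hne' (-v) (half_pos hε)
  rw [sF_shf hC hCne, sF_shf hC hCne] at hp hq
  rw [inner_neg_left, real_inner_smul_left, real_inner_smul_left] at hp hq
  rw [inner_sub_right] at hp
  -- hp : -(c * ⟪u,p⟫) + sF C p + (c * (⟪u,v⟫ - ⟪u,p⟫) + sF C (v - p)) ≤ sF (A∩B) v + ε/2
  rw [inner_sub_right, inner_neg_right] at hq
  set z := p + q with hz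
  have key : w₀ - 2 * c ≤ sF C p + sF C (v - p) + sF C q + sF C (-v - q)
      - 2 * c * ⟪u, z⟫ := by
    by_cases hzn : ‖z‖ ≤ 1
    · have e1 : sF C v ≤ sF C p + sF C (v - p) := by
        have h := sF_add_le hC hCne p (v - p)
        have hpv : p + (v - p) = v := by abel
        rwa [hpv] at h
      have e2 : sF C (-v) ≤ sF C q + sF C (-v - q) := by
        have h := sF_add_le hC hCne q (-v - q)
        have hpv : q + (-v - q) = -v := by abel
        rwa [hpv] at h
      have hiu : ⟪u, z⟫ ≤ 1 := by
        calc ⟪u, z⟫ ≤ ‖u‖ * ‖z‖ := real_inner_le_norm u z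
        _ ≤ 1 := by rw [hu, one_mul]; exact hzn
      have hcu : c * ⟪u, z⟫ ≤ c := by
        calc c * ⟪u, z⟫ ≤ c * 1 := mul_le_mul_of_nonneg_left hiu hc
        _ = c := mul_one c
      linarith [hwidth v hv]
    · push_neg at hzn
      set nz : ℝ := ‖z‖ with hnz
      have hnzpos : (0 : ℝ) < nz := lt_trans one_pos hzn
      set z' : EuclideanSpace ℝ (Fin n) := nz⁻¹ • z with hz'
      have hz'unit : ‖z'‖ = 1 := by
        rw [hz', norm_smul, norm_inv, norm_norm, ← hnz, inv_mul_cancel₀ (ne_of_gt hnzpos)]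
      have hzz : nz • z' = z := smul_inv_smul₀ (ne_of_gt hnzpos) z
      have e3 : sF C z = nz * sF C z' := by
        rw [← hzz, sF_smul hC hCne (le_of_lt hnzpos)]
      have e4 : sF C (-z) = nz * sF C (-z') := by
        have : -z = nz • (-z') := by rw [smul_neg, hzz]
        rw [this, sF_smul hC hCne (le_of_lt hnzpos)]
      have e1 : sF C z ≤ sF C p + sF C q := sF_add_le hC hCne p q
      have e2 : sF C (-z) ≤ sF C (v - p) + sF C (-v - q) := by
        have h := sF_add_le hC hCne (v - p) (-v - q)
        have hpv : (v - p) + (-v - q) = -z := by rw [hz]; abel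
        rwa [hpv] at h
      have hw' := hwidth z' hz'unit
      have hiu : ⟪u, z⟫ ≤ nz := by
        calc ⟪u, z⟫ ≤ ‖u‖ * ‖z‖ := real_inner_le_norm u z
        _ = nz := by rw [hu, one_mul]
      have k1 : nz * w₀ ≤ nz * (sF C z' + sF C (-z')) :=
        mul_le_mul_of_nonneg_left hw' (le_of_lt hnzpos)
      have k2 : 2 * c * ⟪u, z⟫ ≤ 2 * c * nz :=
        mul_le_mul_of_nonneg_left hiu (by linarith)
      have k3 : w₀ - 2 * c ≤ nz * (w₀ - 2 * c) := by nlinarith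
      nlinarith
  rw [hz, inner_add_right] at key
  linarith
lemma translate_lemma : ∀ (m : ℕ) (C : Set (EuclideanSpace ℝ (Fin n))), IsCompact C →
    Convex ℝ C → C.Nonempty →
    ∀ (us : Fin m → EuclideanSpace ℝ (Fin n)) (cs : Fin m → ℝ),
    (∀ i, ‖us i‖ = 1) → (∀ i, 0 ≤ cs i) →
    (∀ v : EuclideanSpace ℝ (Fin n), ‖v‖ = 1 → 2 * ∑ i, cs i ≤ sF C v + sF C (-v)) →
    ∃ t : EuclideanSpace ℝ (Fin n), ∀ ε : Fin m → Bool,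
      (t + ∑ i, (if ε i then cs i else -cs i) • us i) ∈ C := by
  intro m
  induction m with
  | zero =>
    intro C _ _ hCne us cs _ _ _
    obtain ⟨x, hx⟩ := hCne
    exact ⟨x, fun ε => by simpa using hx⟩
  | succ m ih =>
    intro C hC hCc hCne us cs hus hcs hwidth
    set u₀ := us 0 with hu₀
    set c₀ := cs 0 with hc₀
    set C' := shf (-(c₀ • u₀)) C ∩ shf (c₀ • u₀) C with hC'
    have hsum : ∑ i, cs i = c₀ + ∑ i : Fin m, cs i.succ := by
      rw [Fin.sum_univ_succ]
    have h2c : 2 * c₀ ≤ 2 * ∑ i, cs i := by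
      have h1 : ∑ i : Fin m, cs i.succ ≥ 0 := Finset.sum_nonneg fun i _ => hcs _
      rw [hsum]; linarith
    have hne' : C'.Nonempty :=
      erosion_nonempty hC hCc hCne (hus 0) (hcs 0) h2c hwidth
    have hC'cpt : IsCompact C' := (shf_compact hC _).inter_right (shf_compact hC _).isClosed
    have hC'c : Convex ℝ C' := (shf_convex hCc _).inter (shf_convex hCc _)
    have hwidth' : ∀ v : EuclideanSpace ℝ (Fin n), ‖v‖ = 1 →
        2 * ∑ i : Fin m, cs i.succ ≤ sF C' v + sF C' (-v) := by
      intro v hv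
      have := width_erosion hC hCc hCne (hus 0) (hcs 0) h2c hwidth hv
      rw [hsum] at this
      calc 2 * ∑ i : Fin m, cs i.succ
          = 2 * (c₀ + ∑ i : Fin m, cs i.succ) - 2 * c₀ := by ring
      _ ≤ sF C' v + sF C' (-v) := this
    obtain ⟨t, ht⟩ := ih C' hC'cpt hC'c hne' (fun i => us i.succ) (fun i => cs i.succ)
      (fun i => hus _) (fun i => hcs _) hwidth'
    refine ⟨t, fun ε => ?_⟩
    have hmem := ht (fun i => ε i.succ)
    set pt := t + ∑ i : Fin m, (if ε i.succ then cs i.succ else -cs i.succ) • us i.succ with hpt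
    have hptmem : pt ∈ C' := hmem
    obtain ⟨hptA, hptB⟩ := hptmem
    rw [Fin.sum_univ_succ, add_comm ((if ε 0 then cs 0 else -cs 0) • us 0) _, ← add_assoc, ← hpt]
    cases hε0 : ε 0 with
    | true =>
      rw [if_pos rfl]
      have h1 := mem_shf.1 hptA
      rwa [sub_neg_eq_add] at h1
    | false =>
      rw [if_neg (by simp)]
      have h1 := mem_shf.1 hptB
      rwa [neg_smul, ← sub_eq_add_neg]
lemma dirWidth_nonneg {K : Set (EuclideanSpace ℝ (Fin n))} (hK : IsCompact K)
    (hne : K.Nonempty) (v : EuclideanSpace ℝ (Fin n)) : 0 ≤ dirWidth K v := by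
  have hcont : Continuous fun x : EuclideanSpace ℝ (Fin n) => (inner ℝ x v : ℝ) :=
    Continuous.inner continuous_id continuous_const
  rw [dirWidth, sub_nonneg]
  exact csInf_le_csSup (hne.image _) (hK.image hcont).bddBelow (hK.image hcont).bddAbove

/-- Bang's theorem (Tarski's plank problem): if a convex body of minimal width `w`
is covered by finitely many planks, the sum of their widths is at least `w`. -/
theorem bang_plank (K : Set (EuclideanSpace ℝ (Fin n)))
    (hK : IsCompact K) (hKc : Convex ℝ K) (hKi : (interior K).Nonempty)
    (w : ℝ) (hw : w = ⨅ u : {u : EuclideanSpace ℝ (Fin n) // ‖u‖ = 1}, dirWidth K u)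
    (l : ℕ) (u : Fin l → EuclideanSpace ℝ (Fin n)) (a wp : Fin l → ℝ)
    (hu : ∀ i, ‖u i‖ = 1) (hwp : ∀ i, 0 ≤ wp i)
    (hcov : K ⊆ ⋃ i, plank (u i) (a i) (wp i)) :
    w ≤ ∑ i, wp i := by
  classical
  by_contra hcon
  push_neg at hcon
  have hKne : K.Nonempty := ⟨hKi.choose, interior_subset hKi.choose_spec⟩
  have hwp0 : 0 ≤ ∑ i, wp i := Finset.sum_nonneg fun i _ => hwp i
  have hwpos : 0 < w := lt_of_le_of_lt hwp0 hcon
  by_cases hsph : Nonempty {u : EuclideanSpace ℝ (Fin n) // ‖u‖ = 1}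
  swap
  · rw [not_nonempty_iff] at hsph
    rw [Real.iInf_of_isEmpty] at hw
    linarith
  have hwd : ∀ v : EuclideanSpace ℝ (Fin n), ‖v‖ = 1 → w ≤ sF K v + sF K (-v) := by
    intro v hv
    have hb : BddBelow (Set.range fun u : {u : EuclideanSpace ℝ (Fin n) // ‖u‖ = 1} =>
        dirWidth K u) := by
      refine ⟨0, ?_⟩
      rintro x ⟨z, rfl⟩
      exact dirWidth_nonneg hK hKne z
    have h1 := ciInf_le hb (⟨v, hv⟩ : {u : EuclideanSpace ℝ (Fin n) // ‖u‖ = 1})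
    rw [← hw] at h1
    rwa [dirWidth_eq_sF] at h1
  set δ : ℝ := (w - ∑ i, wp i) / (2 * (l + 1)) with hδdef
  have hδ : 0 < δ := div_pos (by linarith) (by positivity)
  set cs : Fin l → ℝ := fun i => wp i / 2 + δ with hcsdef
  have hcspos : ∀ i, 0 < cs i := fun i => by have := hwp i; simp only [hcsdef]; linarith
  have hcs : ∀ i, 0 ≤ cs i := fun i => (hcspos i).le
  have hsum2 : 2 * ∑ i, cs i ≤ w := by
    have h1 : ∑ i, cs i = (∑ i, wp i) / 2 + l * δ := by
      simp only [hcsdef]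
      rw [Finset.sum_add_distrib, Finset.sum_const, Finset.card_univ, Fintype.card_fin,
        ← Finset.sum_div]
      ring
    have h2 : (2 * (l + 1) : ℝ) * δ = w - ∑ i, wp i := by
      rw [hδdef]
      field_simp
    have hl : (0:ℝ) ≤ l := Nat.cast_nonneg l
    rw [h1]
    nlinarith
  have hwidth : ∀ v : EuclideanSpace ℝ (Fin n), ‖v‖ = 1 →
      2 * ∑ i, cs i ≤ sF K v + sF K (-v) := fun v hv => le_trans hsum2 (hwd v hv)
  obtain ⟨t, ht⟩ := translate_lemma l K hK hKc hKne u cs hu hcs hwidth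
  set coef : (Fin l → Bool) → Fin l → ℝ := fun ε i => if ε i then cs i else -cs i with hcoefdef
  set pt : (Fin l → Bool) → EuclideanSpace ℝ (Fin n) :=
    fun ε => t + ∑ i, coef ε i • u i with hptdef
  set b : Fin l → ℝ := fun i => a i + wp i / 2 with hbdef
  set H : (Fin l → Bool) → ℝ := fun ε => ‖pt ε‖^2 - 2 * ∑ i, coef ε i * b i with hHdef
  obtain ⟨εm, hmax⟩ := Finite.exists_max H
  have hptK : pt εm ∈ K := ht εm
  have hmem := hcov hptK
  rw [Set.mem_iUnion] at hmem
  obtain ⟨i, hp1, hp2⟩ := hmem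
  set X : ℝ := ⟪pt εm, u i⟫ - b i with hXdef
  have hXle : |X| ≤ wp i / 2 := by
    rw [abs_le]
    constructor <;> [skip; skip] <;>
      · simp only [hXdef, hbdef]
        change _ at hp1
        linarith [hp1, hp2]
  set ε' : Fin l → Bool := Function.update εm i (!(εm i)) with hε'def
  have hcoef' : ∀ j, coef ε' j = if j = i then -coef εm j else coef εm j := by
    intro j
    by_cases hj : j = i
    · subst hj
      simp only [hε'def, hcoefdef, Function.update_self]
      cases εm j <;> simp
    · simp only [hε'def, hcoefdef, Function.update_of_ne hj, if_neg hj]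
  have hsumdiff : ∑ j, coef ε' j • u j = (∑ j, coef εm j • u j) + (-2 * coef εm i) • u i := by
    have hsplit : ∀ j, coef ε' j • u j
        = coef εm j • u j + (if j = i then (-2 * coef εm i) • u i else 0) := by
      intro j
      rw [hcoef' j]
      by_cases hj : j = i
      · subst hj
        rw [if_pos rfl, if_pos rfl, ← add_smul]
        congr 1
        ring
      · rw [if_neg hj, if_neg hj, add_zero]
    rw [Finset.sum_congr rfl (fun j _ => hsplit j), Finset.sum_add_distrib,
      Finset.sum_ite_eq' Finset.univ i (fun _ => (-2 * coef εm i) • u i)]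
    simp
  have hptdiff : pt ε' = pt εm + (-2 * coef εm i) • u i := by
    simp only [hptdef]
    rw [hsumdiff, add_assoc]
  have hbdiff : ∑ j, coef ε' j * b j = (∑ j, coef εm j * b j) + (-2 * coef εm i) * b i := by
    have hsplit : ∀ j, coef ε' j * b j
        = coef εm j * b j + (if j = i then (-2 * coef εm i) * b i else 0) := by
      intro j
      rw [hcoef' j]
      by_cases hj : j = i
      · subst hj
        rw [if_pos rfl, if_pos rfl]
        ring
      · rw [if_neg hj, if_neg hj, add_zero]
    rw [Finset.sum_congr rfl (fun j _ => hsplit j), Finset.sum_add_distrib,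
      Finset.sum_ite_eq' Finset.univ i (fun _ => (-2 * coef εm i) * b i)]
    simp
  have hnormexp : ‖pt ε'‖^2
      = ‖pt εm‖^2 + 2 * ((-2 * coef εm i) * ⟪pt εm, u i⟫) + (2 * coef εm i)^2 := by
    rw [hptdiff, norm_add_sq_real, real_inner_smul_right, norm_smul]
    simp only [hu i, mul_one]
    rw [Real.norm_eq_abs]
    rw [mul_pow, sq_abs]
    ring
  have hHle := hmax ε'
  rw [hHdef] at hHle
  simp only at hHle
  rw [hnormexp, hbdiff] at hHle
  have hkey : coef εm i * X ≥ (coef εm i)^2 := by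
    simp only [hXdef]
    nlinarith [hHle]
  have habs : cs i ≤ |X| := by
    have hci : coef εm i = cs i ∨ coef εm i = -cs i := by
      simp only [hcoefdef]
      cases εm i <;> simp
    rcases hci with hci | hci
    · rw [hci] at hkey
      have hX : cs i ≤ X := by nlinarith [hcspos i]
      exact le_trans hX (le_abs_self X)
    · rw [hci] at hkey
      have hX : cs i ≤ -X := by nlinarith [hcspos i]
      exact le_trans hX (neg_le_abs X)
  have : cs i ≤ wp i / 2 := le_trans habs hXle
  simp only [hcsdef] at this
  linarith
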